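/- If A is symmetric and X satisfies A X + X X^T X = 0 with X of full column rank k, then the column space of X is an invariant subspace of A, and -X^T X (which is symmetric positive semidefinite) has eigenvalues equal to the negatives of k eigenvalues of A restricted to that subspace; in particular X^T X is similar to -Λ for a diagonal matrix Λ of k negative eigenvalues of A. -/

import Mathlib

open Matrix

lemma mulVec_inj_of_rank {N k : ℕ} (X : Matrix (Fin N) (Fin k) ℝ)
    (hrank : X.rank = k) : ∀ u : Fin k → ℝ, X *ᵥ u = 0 → u = 0 := by
  intro u hu
  have hrn := X.mulVecLin.finrank_range_add_finrank_ker
  have hfin : Module.finrank ℝ (Fin k → ℝ) = k := by simp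
  rw [hfin] at hrn
  have hr : Module.finrank ℝ (LinearMap.range X.mulVecLin) = k := hrank
  have hker : Module.finrank ℝ (LinearMap.ker X.mulVecLin) = 0 := by omega
  have : LinearMap.ker X.mulVecLin = ⊥ := Submodule.finrank_eq_zero.mp hker
  have : u ∈ LinearMap.ker X.mulVecLin := by simpa [Matrix.mulVecLin_apply] using hu
  simpa [‹LinearMap.ker X.mulVecLin = ⊥›] using this

/-- If `A` is symmetric and `X` of full column rank `k` satisfies the
stationarity condition `A X + X XᵀX = 0`, then the column space of `X` is an
invariant subspace of `A` (i.e. `A X = X B` for some `B`), `XᵀX` is symmetric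
positive semidefinite, and `XᵀX` is similar to `-Λ` for a diagonal matrix `Λ`
consisting of `k` negative eigenvalues of `A`. -/
theorem stationary_f1_structure
    (N k : ℕ) (A : Matrix (Fin N) (Fin N) ℝ) (hA : A.IsSymm)
    (X : Matrix (Fin N) (Fin k) ℝ)
    (hrank : X.rank = k)
    (hstat : A * X + X * (Xᵀ * X) = 0) :
    (∃ B : Matrix (Fin k) (Fin k) ℝ, A * X = X * B) ∧
      (Xᵀ * X).PosSemidef ∧
      (∃ (P : Matrix (Fin k) (Fin k) ℝ) (lam : Fin k → ℝ),
        IsUnit P ∧ (∀ i, lam i < 0) ∧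
        (∀ i, ∃ v : Fin N → ℝ, v ≠ 0 ∧ A *ᵥ v = lam i • v) ∧
        Xᵀ * X = P * Matrix.diagonal (fun i => -(lam i)) * P⁻¹) := by
  have hAX : A * X = -(X * (Xᵀ * X)) := by
    have := hstat
    linear_combination (norm := abel) hstat
  have hXinj := mulVec_inj_of_rank X hrank
  have hPSD : (Xᵀ * X).PosSemidef := by
    have := Matrix.posSemidef_conjTranspose_mul_self X
    simpa [Matrix.conjTranspose_eq_transpose_of_trivial] using this
  -- positive definiteness
  have hPD : (Xᵀ * X).PosDef := by
    refine Matrix.PosDef.of_dotProduct_mulVec_pos hPSD.1 fun x hx => ?_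
    have hdp : star x ⬝ᵥ ((Xᵀ * X) *ᵥ x) = (X *ᵥ x) ⬝ᵥ (X *ᵥ x) := by
      rw [star_trivial, ← Matrix.mulVec_mulVec, Matrix.dotProduct_mulVec,
        Matrix.vecMul_transpose]
    rw [hdp]
    have hXx : X *ᵥ x ≠ 0 := fun h => hx (hXinj x h)
    have hnonneg : 0 ≤ (X *ᵥ x) ⬝ᵥ (X *ᵥ x) :=
      Finset.sum_nonneg fun i _ => mul_self_nonneg _
    exact lt_of_le_of_ne hnonneg (fun h => hXx (dotProduct_self_eq_zero.mp h.symm))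
  refine ⟨⟨-(Xᵀ * X), by rw [hAX, Matrix.mul_neg]⟩, hPSD, ?_⟩
  have hG : (Xᵀ * X).IsHermitian := hPSD.1
  set P : Matrix (Fin k) (Fin k) ℝ := (hG.eigenvectorUnitary : Matrix (Fin k) (Fin k) ℝ)
  have hPunit : P * star P = 1 := Matrix.mem_unitaryGroup_iff.mp hG.eigenvectorUnitary.2
  refine ⟨P, fun i => -(hG.eigenvalues i), (Matrix.isUnit_iff_isUnit_det P).mpr (Matrix.isUnit_det_of_right_inverse hPunit), ?_, ?_, ?_⟩
  · intro i
    simpa using hPD.eigenvalues_pos i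
  · intro i
    have hu := hG.mulVec_eigenvectorBasis i
    set u : Fin k → ℝ := ⇑(hG.eigenvectorBasis i) with hudef
    refine ⟨X *ᵥ u, ?_, ?_⟩
    · intro h
      exact hG.eigenvectorBasis.orthonormal.ne_zero i (by ext j; exact congrFun (hXinj _ h) j)
    · rw [Matrix.mulVec_mulVec, hAX, Matrix.neg_mulVec, ← Matrix.mulVec_mulVec, hu, Matrix.mulVec_smul, neg_smul]
  · have hinv : P⁻¹ = star P := Matrix.inv_eq_right_inv hPunit
    rw [hinv]
    have := hG.spectral_theorem
    simpa [neg_neg, Function.comp] using this
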